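/- (Expected single-shot error of the randomized product.) Let (Ω,P), Ũ, Q and Q̃ be as in the probabilistic setup, let U : Fin N → Matrix (Fin d) (Fin d) ℂ be fixed unitary matrices, and set Q = (Q_{N−1}U_{N−1})···(Q_0U_0). Let b be an integer with 2^b ≥ √N, and suppose that for every l: almost surely ‖Ũ_l(ω) − E[Ũ_l]‖ ≤ 2π·2^{−b}, and ‖E[Ũ_l] − U_l‖ ≤ π²·2^{−(2b+1)}. Then for every ψ ∈ EuclideanSpace ℂ (Fin d) with ‖ψ‖ ≤ 1, E[‖(Q̃ − Q)·ψ‖] ≤ 4π·√N·2^{−b}. -/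

import Mathlib

open MeasureTheory ProbabilityTheory Real

/-- The ℓ²→ℓ² operator norm of a square complex matrix. -/
noncomputable def opNorm {n : Type*} [Fintype n] [DecidableEq n] (M : Matrix n n ℂ) : ℝ :=
  ‖Matrix.toEuclideanCLM (𝕜 := ℂ) M‖

/-- The ordered product `F (N−1) * ⋯ * F 0` (factors in decreasing index order). -/
noncomputable def prodDesc {N d : ℕ} (F : Fin N → Matrix (Fin d) (Fin d) ℂ) :
    Matrix (Fin d) (Fin d) ℂ :=
  ((List.ofFn F).reverse).prod

noncomputable instance matrixMeasurableSpace {d : ℕ} : MeasurableSpace (Matrix (Fin d) (Fin d) ℂ) :=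
  inferInstanceAs (MeasurableSpace (Fin d → Fin d → ℂ))

/-- Entrywise (Bochner) expectation of a random matrix. -/
noncomputable def mExp {Ω : Type*} [MeasurableSpace Ω] (P : Measure Ω) {d : ℕ}
    (X : Ω → Matrix (Fin d) (Fin d) ℂ) : Matrix (Fin d) (Fin d) ℂ :=
  Matrix.of fun p q => ∫ ω, X ω p q ∂P

/-- A matrix acting on a Euclidean vector by `Matrix.mulVec`. -/
noncomputable def mvec {d : ℕ} (M : Matrix (Fin d) (Fin d) ℂ)
    (ψ : EuclideanSpace ℂ (Fin d)) : EuclideanSpace ℂ (Fin d) :=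
  (WithLp.equiv 2 _).symm (M.mulVec (WithLp.equiv 2 _ ψ))

set_option linter.unusedSectionVars false

namespace Aux

variable {d : ℕ}

lemma mvec_eq (M : Matrix (Fin d) (Fin d) ℂ) (v : EuclideanSpace ℂ (Fin d)) :
    mvec M v = Matrix.toEuclideanCLM (𝕜 := ℂ) M v := by
  rfl

lemma mvec_apply (M : Matrix (Fin d) (Fin d) ℂ) (v : EuclideanSpace ℂ (Fin d)) (p : Fin d) :
    mvec M v p = ∑ j, M p j * v j := by
  simp [mvec, Matrix.mulVec, dotProduct]

lemma norm_mvec_le (M : Matrix (Fin d) (Fin d) ℂ) (v : EuclideanSpace ℂ (Fin d)) :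
    ‖mvec M v‖ ≤ opNorm M * ‖v‖ := by
  rw [mvec_eq]; exact ContinuousLinearMap.le_opNorm _ v

lemma mvec_sub (A B : Matrix (Fin d) (Fin d) ℂ) (v : EuclideanSpace ℂ (Fin d)) :
    mvec (A - B) v = mvec A v - mvec B v := by
  simp [mvec_eq, map_sub, ContinuousLinearMap.sub_apply]

lemma mvec_mul (A B : Matrix (Fin d) (Fin d) ℂ) (v : EuclideanSpace ℂ (Fin d)) :
    mvec (A * B) v = mvec A (mvec B v) := by
  simp [mvec_eq, map_mul, ContinuousLinearMap.mul_apply]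

lemma opNorm_nonneg (M : Matrix (Fin d) (Fin d) ℂ) : 0 ≤ opNorm M := norm_nonneg _

lemma opNorm_mul_le (A B : Matrix (Fin d) (Fin d) ℂ) :
    opNorm (A * B) ≤ opNorm A * opNorm B := by
  rw [opNorm, map_mul]; exact norm_mul_le _ _

lemma opNorm_one_le : opNorm (1 : Matrix (Fin d) (Fin d) ℂ) ≤ 1 := by
  rw [opNorm, map_one, ContinuousLinearMap.one_def]
  exact ContinuousLinearMap.norm_id_le

lemma opNorm_sub_rev (A B : Matrix (Fin d) (Fin d) ℂ) :
    opNorm (A - B) = opNorm (B - A) := by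
  rw [opNorm, opNorm, map_sub, map_sub, norm_sub_rev]

lemma mem_unitary_clm {M : Matrix (Fin d) (Fin d) ℂ} (hM : M ∈ Matrix.unitaryGroup (Fin d) ℂ) :
    Matrix.toEuclideanCLM (𝕜 := ℂ) M ∈
      unitary (EuclideanSpace ℂ (Fin d) →L[ℂ] EuclideanSpace ℂ (Fin d)) := by
  constructor
  · rw [← map_star, ← map_mul, (Unitary.mem_iff.mp hM).1, map_one]
  · rw [← map_star, ← map_mul, (Unitary.mem_iff.mp hM).2, map_one]

lemma opNorm_unitary_le {M : Matrix (Fin d) (Fin d) ℂ}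
    (hM : M ∈ Matrix.unitaryGroup (Fin d) ℂ) : opNorm M ≤ 1 := by
  have h1 : star (Matrix.toEuclideanCLM (𝕜 := ℂ) M) * Matrix.toEuclideanCLM (𝕜 := ℂ) M = 1 :=
    (Unitary.mem_iff.mp (mem_unitary_clm hM)).1
  have h2 := CStarRing.norm_star_mul_self (x := Matrix.toEuclideanCLM (𝕜 := ℂ) M)
  rw [h1] at h2
  have h3 : ‖(1 : EuclideanSpace ℂ (Fin d) →L[ℂ] EuclideanSpace ℂ (Fin d))‖ ≤ 1 := by
    rw [ContinuousLinearMap.one_def]; exact ContinuousLinearMap.norm_id_le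
  have h4 : opNorm M = ‖Matrix.toEuclideanCLM (𝕜 := ℂ) M‖ := rfl
  nlinarith [norm_nonneg (Matrix.toEuclideanCLM (𝕜 := ℂ) M)]

lemma norm_mvec_unitary {M : Matrix (Fin d) (Fin d) ℂ}
    (hM : M ∈ Matrix.unitaryGroup (Fin d) ℂ) (v : EuclideanSpace ℂ (Fin d)) :
    ‖mvec M v‖ = ‖v‖ := by
  rw [mvec_eq]
  exact ContinuousLinearMap.norm_map_of_mem_unitary (mem_unitary_clm hM) v

lemma coord_le_norm (x : EuclideanSpace ℂ (Fin d)) (p : Fin d) : ‖x p‖ ≤ ‖x‖ := by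
  rw [EuclideanSpace.norm_eq]
  have h : ‖x p‖ = Real.sqrt (‖x p‖ ^ 2) := (Real.sqrt_sq (norm_nonneg _)).symm
  rw [h]
  apply Real.sqrt_le_sqrt
  exact Finset.single_le_sum (f := fun i => ‖x i‖ ^ 2) (fun i _ => sq_nonneg _)
    (Finset.mem_univ p)

lemma entry_le_opNorm (M : Matrix (Fin d) (Fin d) ℂ) (p q : Fin d) :
    ‖M p q‖ ≤ opNorm M := by
  have h : M p q = mvec M (EuclideanSpace.single q 1) p := by
    rw [mvec_apply]
    simp [EuclideanSpace.single_apply, Finset.sum_ite_eq]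
  calc ‖M p q‖ = ‖mvec M (EuclideanSpace.single q 1) p‖ := by rw [h]
    _ ≤ ‖mvec M (EuclideanSpace.single q 1)‖ := coord_le_norm _ p
    _ ≤ opNorm M * ‖EuclideanSpace.single q (1:ℂ)‖ := norm_mvec_le _ _
    _ = opNorm M := by rw [EuclideanSpace.norm_single]; simp

end Aux

namespace Aux

variable {d : ℕ}

lemma prodDesc_zero (F : Fin 0 → Matrix (Fin d) (Fin d) ℂ) : prodDesc F = 1 := by
  simp [prodDesc]

lemma prodDesc_succ {N : ℕ} (F : Fin (N + 1) → Matrix (Fin d) (Fin d) ℂ) :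
    prodDesc F = prodDesc (fun j => F j.succ) * F 0 := by
  simp [prodDesc, List.ofFn_succ, Function.comp]

lemma opNorm_prodDesc_le_one {N : ℕ} (F : Fin N → Matrix (Fin d) (Fin d) ℂ)
    (h : ∀ j, opNorm (F j) ≤ 1) : opNorm (prodDesc F) ≤ 1 := by
  induction N with
  | zero => rw [prodDesc_zero]; exact opNorm_one_le
  | succ n ih =>
    rw [prodDesc_succ]
    calc opNorm (prodDesc (fun j => F j.succ) * F 0)
        ≤ opNorm (prodDesc (fun j => F j.succ)) * opNorm (F 0) := opNorm_mul_le _ _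
      _ ≤ 1 * 1 := by
          apply mul_le_mul (ih _ fun j => h j.succ) (h 0) (opNorm_nonneg _) zero_le_one
      _ = 1 := one_mul 1

lemma prodDesc_diff_le {N : ℕ} (F G : Fin N → Matrix (Fin d) (Fin d) ℂ)
    (hF : ∀ j, opNorm (F j) ≤ 1) (hG : ∀ j, opNorm (G j) ≤ 1) :
    opNorm (prodDesc F - prodDesc G) ≤ ∑ j, opNorm (F j - G j) := by
  induction N with
  | zero =>
    rw [prodDesc_zero, prodDesc_zero, sub_self, opNorm, map_zero, norm_zero]
    simp
  | succ n ih =>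
    rw [prodDesc_succ F, prodDesc_succ G]
    have key : prodDesc (fun j => F j.succ) * F 0 - prodDesc (fun j => G j.succ) * G 0
        = (prodDesc (fun j => F j.succ) - prodDesc (fun j => G j.succ)) * F 0
          + prodDesc (fun j => G j.succ) * (F 0 - G 0) := by
      rw [sub_mul, mul_sub]; abel
    rw [key, Fin.sum_univ_succ]
    have t1 : opNorm ((prodDesc (fun j => F j.succ) - prodDesc (fun j => G j.succ)) * F 0)
        ≤ ∑ j : Fin n, opNorm (F j.succ - G j.succ) := by
      calc _ ≤ opNorm (prodDesc (fun j => F j.succ) - prodDesc (fun j => G j.succ)) *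
            opNorm (F 0) := opNorm_mul_le _ _
        _ ≤ (∑ j : Fin n, opNorm (F j.succ - G j.succ)) * 1 := by
            apply mul_le_mul (ih _ _ (fun j => hF j.succ) (fun j => hG j.succ)) (hF 0)
              (opNorm_nonneg _)
            exact Finset.sum_nonneg fun j _ => opNorm_nonneg _
        _ = _ := mul_one _
    have t2 : opNorm (prodDesc (fun j => G j.succ) * (F 0 - G 0)) ≤ opNorm (F 0 - G 0) := by
      calc _ ≤ opNorm (prodDesc (fun j => G j.succ)) * opNorm (F 0 - G 0) := opNorm_mul_le _ _
        _ ≤ 1 * opNorm (F 0 - G 0) := by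
            apply mul_le_mul_of_nonneg_right (opNorm_prodDesc_le_one _ fun j => hG j.succ)
              (opNorm_nonneg _)
        _ = _ := one_mul _
    have tri : opNorm ((prodDesc (fun j => F j.succ) - prodDesc (fun j => G j.succ)) * F 0
          + prodDesc (fun j => G j.succ) * (F 0 - G 0))
        ≤ opNorm ((prodDesc (fun j => F j.succ) - prodDesc (fun j => G j.succ)) * F 0)
          + opNorm (prodDesc (fun j => G j.succ) * (F 0 - G 0)) := by
      rw [opNorm, opNorm, opNorm, map_add]; exact norm_add_le _ _
    linarith

lemma prodDesc_mem_unitary {N : ℕ} (F : Fin N → Matrix (Fin d) (Fin d) ℂ)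
    (h : ∀ j, F j ∈ Matrix.unitaryGroup (Fin d) ℂ) :
    prodDesc F ∈ Matrix.unitaryGroup (Fin d) ℂ := by
  apply Submonoid.list_prod_mem
  intro x hx
  rw [List.mem_reverse, List.mem_ofFn] at hx
  obtain ⟨j, rfl⟩ := hx
  exact h j

end Aux

namespace Aux

variable {d : ℕ} {α : Type*} [MeasurableSpace α]

lemma measurable_entry {A : α → Matrix (Fin d) (Fin d) ℂ} (hA : Measurable A) (p q : Fin d) :
    Measurable fun x => A x p q :=
  (measurable_pi_apply q).comp ((measurable_pi_apply p).comp hA)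

lemma measurable_matrix_mul {A B : α → Matrix (Fin d) (Fin d) ℂ}
    (hA : Measurable A) (hB : Measurable B) : Measurable fun x => A x * B x := by
  refine measurable_pi_iff.mpr fun p => ?_
  rw [measurable_pi_iff]; intro q
  simp only [Matrix.mul_apply]
  exact Finset.measurable_sum _ fun r _ => (measurable_entry hA p r).mul (measurable_entry hB r q)

lemma measurable_list_prod {ι : Type*} (l : List ι) (F : ι → α → Matrix (Fin d) (Fin d) ℂ)
    (hF : ∀ i ∈ l, Measurable (F i)) :
    Measurable fun x => (l.map fun i => F i x).prod := by
  induction l with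
  | nil => simp only [List.map_nil, List.prod_nil]; exact measurable_const
  | cons a t ih =>
    simp only [List.map_cons, List.prod_cons]
    exact measurable_matrix_mul (hF a (List.mem_cons_self))
      (ih fun i hi => hF i (List.mem_cons_of_mem a hi))

lemma measurable_prodDesc {N : ℕ} {F : Fin N → α → Matrix (Fin d) (Fin d) ℂ}
    (hF : ∀ j, Measurable (F j)) : Measurable fun x => prodDesc (fun j => F j x) := by
  induction N with
  | zero => simp only [prodDesc_zero]; exact measurable_const
  | succ n ih =>
    simp only [prodDesc_succ]
    exact measurable_matrix_mul (ih fun j => hF j.succ) (hF 0)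

lemma opNorm_list_prod_le_one (l : List (Matrix (Fin d) (Fin d) ℂ))
    (h : ∀ a ∈ l, opNorm a ≤ 1) : opNorm l.prod ≤ 1 := by
  induction l with
  | nil => simpa using opNorm_one_le
  | cons a t ih =>
    rw [List.prod_cons]
    calc opNorm (a * t.prod) ≤ opNorm a * opNorm t.prod := opNorm_mul_le _ _
      _ ≤ 1 * 1 := mul_le_mul (h a (List.mem_cons_self))
          (ih fun x hx => h x (List.mem_cons_of_mem a hx)) (opNorm_nonneg _) zero_le_one
      _ = 1 := one_mul 1

variable {Ω : Type*} [MeasurableSpace Ω] {P : Measure Ω} [IsProbabilityMeasure P]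

lemma integrable_entry {A : Ω → Matrix (Fin d) (Fin d) ℂ} (hA : Measurable A)
    (hbd : ∀ᵐ ω ∂P, opNorm (A ω) ≤ 1) (p q : Fin d) :
    Integrable (fun ω => A ω p q) P := by
  refine Integrable.mono' (integrable_const 1) (measurable_entry hA p q).aestronglyMeasurable ?_
  filter_upwards [hbd] with ω h using le_trans (entry_le_opNorm _ p q) h

lemma integral_mul_indep_complex {X Y : Ω → ℂ} (h : IndepFun X Y P)
    (hX : Integrable X P) (hY : Integrable Y P) :
    ∫ ω, X ω * Y ω ∂P = (∫ ω, X ω ∂P) * ∫ ω, Y ω ∂P := by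
  have hrr : IndepFun (fun ω => (X ω).re) (fun ω => (Y ω).re) P :=
    h.comp Complex.measurable_re Complex.measurable_re
  have hri : IndepFun (fun ω => (X ω).re) (fun ω => (Y ω).im) P :=
    h.comp Complex.measurable_re Complex.measurable_im
  have hir : IndepFun (fun ω => (X ω).im) (fun ω => (Y ω).re) P :=
    h.comp Complex.measurable_im Complex.measurable_re
  have hii : IndepFun (fun ω => (X ω).im) (fun ω => (Y ω).im) P :=
    h.comp Complex.measurable_im Complex.measurable_im
  have hXr : Integrable (fun ω => (X ω).re) P := by simpa using hX.re
  have hXi : Integrable (fun ω => (X ω).im) P := by simpa using hX.im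
  have hYr : Integrable (fun ω => (Y ω).re) P := by simpa using hY.re
  have hYi : Integrable (fun ω => (Y ω).im) P := by simpa using hY.im
  have prr : ∫ ω, (X ω).re * (Y ω).re ∂P = (∫ ω, (X ω).re ∂P) * ∫ ω, (Y ω).re ∂P :=
    hrr.integral_mul_eq_mul_integral hXr.1 hYr.1
  have pri : ∫ ω, (X ω).re * (Y ω).im ∂P = (∫ ω, (X ω).re ∂P) * ∫ ω, (Y ω).im ∂P :=
    hri.integral_mul_eq_mul_integral hXr.1 hYi.1
  have pir : ∫ ω, (X ω).im * (Y ω).re ∂P = (∫ ω, (X ω).im ∂P) * ∫ ω, (Y ω).re ∂P :=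
    hir.integral_mul_eq_mul_integral hXi.1 hYr.1
  have pii : ∫ ω, (X ω).im * (Y ω).im ∂P = (∫ ω, (X ω).im ∂P) * ∫ ω, (Y ω).im ∂P :=
    hii.integral_mul_eq_mul_integral hXi.1 hYi.1
  have irr : Integrable (fun ω => (X ω).re * (Y ω).re) P := hrr.integrable_mul hXr hYr
  have iri : Integrable (fun ω => (X ω).re * (Y ω).im) P := hri.integrable_mul hXr hYi
  have iir : Integrable (fun ω => (X ω).im * (Y ω).re) P := hir.integrable_mul hXi hYr
  have iii : Integrable (fun ω => (X ω).im * (Y ω).im) P := hii.integrable_mul hXi hYi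
  have hXY : Integrable (fun ω => X ω * Y ω) P := h.integrable_mul hX hY
  have hre : (∫ ω, X ω * Y ω ∂P).re
      = (∫ ω, (X ω).re ∂P) * (∫ ω, (Y ω).re ∂P)
        - (∫ ω, (X ω).im ∂P) * (∫ ω, (Y ω).im ∂P) := by
    have h1 : (∫ ω, X ω * Y ω ∂P).re = ∫ ω, (X ω * Y ω).re ∂P := by
      rw [← RCLike.re_to_complex]
      rw [← integral_re hXY]
      simp
    rw [h1]
    have h2 : ∀ ω, (X ω * Y ω).re = (X ω).re * (Y ω).re - (X ω).im * (Y ω).im :=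
      fun ω => Complex.mul_re _ _
    rw [integral_congr_ae (Filter.Eventually.of_forall h2), integral_sub irr iii, prr, pii]
  have him : (∫ ω, X ω * Y ω ∂P).im
      = (∫ ω, (X ω).re ∂P) * (∫ ω, (Y ω).im ∂P)
        + (∫ ω, (X ω).im ∂P) * (∫ ω, (Y ω).re ∂P) := by
    have h1 : (∫ ω, X ω * Y ω ∂P).im = ∫ ω, (X ω * Y ω).im ∂P := by
      rw [← RCLike.im_to_complex, ← integral_im hXY]
      simp
    rw [h1]
    have h2 : ∀ ω, (X ω * Y ω).im = (X ω).re * (Y ω).im + (X ω).im * (Y ω).re :=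
      fun ω => Complex.mul_im _ _
    rw [integral_congr_ae (Filter.Eventually.of_forall h2), integral_add iri iir, pri, pir]
  have hXre : (∫ ω, X ω ∂P).re = ∫ ω, (X ω).re ∂P := by
    rw [← RCLike.re_to_complex, ← integral_re hX]; simp
  have hXim : (∫ ω, X ω ∂P).im = ∫ ω, (X ω).im ∂P := by
    rw [← RCLike.im_to_complex, ← integral_im hX]; simp
  have hYre : (∫ ω, Y ω ∂P).re = ∫ ω, (Y ω).re ∂P := by
    rw [← RCLike.re_to_complex, ← integral_re hY]; simp
  have hYim : (∫ ω, Y ω ∂P).im = ∫ ω, (Y ω).im ∂P := by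
    rw [← RCLike.im_to_complex, ← integral_im hY]; simp
  apply Complex.ext
  · rw [hre, Complex.mul_re, hXre, hXim, hYre, hYim]
  · rw [him, Complex.mul_im, hXre, hXim, hYre, hYim]

end Aux

namespace Aux

variable {d : ℕ} {Ω : Type*} [MeasurableSpace Ω] {P : Measure Ω} [IsProbabilityMeasure P]

lemma mExp_apply (X : Ω → Matrix (Fin d) (Fin d) ℂ) (p q : Fin d) :
    mExp P X p q = ∫ ω, X ω p q ∂P := rfl

lemma mExp_one : mExp P (fun _ => (1 : Matrix (Fin d) (Fin d) ℂ)) = 1 := by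
  ext p q
  rw [mExp_apply, integral_const]
  simp

lemma mExp_mul_indep {A B : Ω → Matrix (Fin d) (Fin d) ℂ}
    (hA : Measurable A) (hB : Measurable B)
    (hAi : ∀ p q, Integrable (fun ω => A ω p q) P)
    (hBi : ∀ p q, Integrable (fun ω => B ω p q) P)
    (hAB : IndepFun A B P) :
    mExp P (fun ω => A ω * B ω) = mExp P A * mExp P B := by
  ext p q
  rw [Matrix.mul_apply, mExp_apply]
  have h1 : ∀ ω, (A ω * B ω) p q = ∑ r, A ω p r * B ω r q := fun ω => Matrix.mul_apply
  rw [integral_congr_ae (Filter.Eventually.of_forall h1)]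
  have hint : ∀ r : Fin d, Integrable (fun ω => A ω p r * B ω r q) P := fun r =>
    (hAB.comp (measurable_entry measurable_id p r)
      (measurable_entry measurable_id r q)).integrable_mul (hAi p r) (hBi r q)
  rw [integral_finset_sum _ fun r _ => hint r]
  refine Finset.sum_congr rfl fun r _ => ?_
  have h' : IndepFun (fun ω => A ω p r) (fun ω => B ω r q) P :=
    hAB.comp (measurable_entry measurable_id p r) (measurable_entry measurable_id r q)
  rw [mExp_apply, mExp_apply]
  exact integral_mul_indep_complex h' (hAi p r) (hBi r q)

lemma mExp_list_prod {ι : Type*} [DecidableEq ι] (X : ι → Ω → Matrix (Fin d) (Fin d) ℂ)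
    (hmeas : ∀ i, Measurable (X i))
    (hindep : iIndepFun (m := fun _ => matrixMeasurableSpace) X P)
    (hbd : ∀ᵐ ω ∂P, ∀ i, opNorm (X i ω) ≤ 1) :
    ∀ s : List ι, s.Nodup →
      mExp P (fun ω => (s.map fun i => X i ω).prod) = (s.map fun i => mExp P (X i)).prod := by
  intro s
  induction s with
  | nil => intro _; simpa using mExp_one
  | cons i t ih =>
    intro hnd
    have hndt : t.Nodup := (List.nodup_cons.mp hnd).2
    have hit : i ∉ t := (List.nodup_cons.mp hnd).1
    -- the tail product as a random matrix
    set B : Ω → Matrix (Fin d) (Fin d) ℂ := fun ω => (t.map fun a => X a ω).prod with hBdef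
    have hBmeas : Measurable B := measurable_list_prod t X fun a _ => hmeas a
    -- independence of X i and B
    have hdisj : Disjoint ({i} : Finset ι) t.toFinset := by
      rw [Finset.disjoint_singleton_left, List.mem_toFinset]; exact hit
    have hfin := hindep.indepFun_finset {i} t.toFinset hdisj hmeas
    have hAB : IndepFun (X i) B P := by
      have hφ1 : Measurable fun g : {x : ι // x ∈ ({i} : Finset ι)} → Matrix (Fin d) (Fin d) ℂ =>
          g ⟨i, Finset.mem_singleton_self i⟩ := measurable_pi_apply _
      have hφ2 : Measurable fun g : {x : ι // x ∈ t.toFinset} → Matrix (Fin d) (Fin d) ℂ =>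
          (t.attach.map fun a => g ⟨a.1, List.mem_toFinset.mpr a.2⟩).prod :=
        measurable_list_prod t.attach
          (fun (a : {x : ι // x ∈ t}) (g : {x : ι // x ∈ t.toFinset} → Matrix (Fin d) (Fin d) ℂ)
            => g ⟨a.1, List.mem_toFinset.mpr a.2⟩)
          (fun a _ => measurable_pi_apply _)
      have h2 := hfin.comp hφ1 hφ2
      have he2 : (fun ω => (t.attach.map fun a => X a.1 ω).prod) = B := by
        funext ω
        simp only [hBdef]
        congr 1
        exact List.attach_map_val (l := t) (f := fun a => X a ω)
      rw [← he2]
      exact h2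
    -- a.e. operator norm bounds
    have hbdB : ∀ᵐ ω ∂P, opNorm (B ω) ≤ 1 := by
      filter_upwards [hbd] with ω hω
      apply opNorm_list_prod_le_one
      intro a ha
      rw [List.mem_map] at ha
      obtain ⟨j, _, rfl⟩ := ha
      exact hω j
    have hbdXi : ∀ᵐ ω ∂P, opNorm (X i ω) ≤ 1 := by
      filter_upwards [hbd] with ω hω using hω i
    have step := mExp_mul_indep (hmeas i) hBmeas
      (integrable_entry (hmeas i) hbdXi) (integrable_entry hBmeas hbdB) hAB
    simp only [List.map_cons, List.prod_cons]
    rw [show (fun ω => X i ω * (t.map fun a => X a ω).prod) = fun ω => X i ω * B ω from rfl,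
      step, ih hndt]

end Aux

namespace Aux

variable {d : ℕ} {Ω : Type*} [MeasurableSpace Ω] {P : Measure Ω} [IsProbabilityMeasure P]

lemma integrable_conj' {f : Ω → ℂ} (hf : Integrable f P) :
    Integrable (fun ω => (starRingEnd ℂ) (f ω)) P := by
  refine Integrable.mono' hf.norm
    (RCLike.continuous_conj.comp_aestronglyMeasurable hf.1) ?_
  filter_upwards with ω
  simp

lemma inner_mvec_expand (M : Matrix (Fin d) (Fin d) ℂ) (v w : EuclideanSpace ℂ (Fin d)) :
    (inner ℂ (mvec M v) w : ℂ)
      = ∑ p, ∑ j, (starRingEnd ℂ) (M p j) * ((starRingEnd ℂ) (v j) * w p) := by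
  rw [PiLp.inner_apply]
  refine Finset.sum_congr rfl fun p _ => ?_
  rw [RCLike.inner_apply', mvec_apply, map_sum, Finset.sum_mul]
  refine Finset.sum_congr rfl fun j _ => ?_
  rw [map_mul, mul_assoc]

lemma integral_inner_mvec {X : Ω → Matrix (Fin d) (Fin d) ℂ}
    (hint : ∀ p q, Integrable (fun ω => X ω p q) P) (v w : EuclideanSpace ℂ (Fin d)) :
    ∫ ω, (inner ℂ (mvec (X ω) v) w : ℂ) ∂P = inner ℂ (mvec (mExp P X) v) w := by
  simp only [inner_mvec_expand]
  have hterm : ∀ p j : Fin d,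
      Integrable (fun ω => (starRingEnd ℂ) (X ω p j) * ((starRingEnd ℂ) (v j) * w p)) P :=
    fun p j => (integrable_conj' (hint p j)).mul_const _
  rw [integral_finset_sum _ fun p _ => integrable_finset_sum _ fun j _ => hterm p j]
  refine Finset.sum_congr rfl fun p _ => ?_
  rw [integral_finset_sum _ fun j _ => hterm p j]
  refine Finset.sum_congr rfl fun j _ => ?_
  rw [integral_mul_const, integral_conj, mExp_apply]

lemma opNorm_mExp_le {X : Ω → Matrix (Fin d) (Fin d) ℂ} (hX : Measurable X) {C : ℝ}
    (hC : 0 ≤ C) (hbd : ∀ᵐ ω ∂P, opNorm (X ω) ≤ C) : opNorm (mExp P X) ≤ C := by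
  rw [opNorm]
  apply ContinuousLinearMap.opNorm_le_bound _ hC
  intro v
  rw [show (Matrix.toEuclideanCLM (𝕜 := ℂ) (mExp P X)) v = mvec (mExp P X) v from
    (mvec_eq _ _).symm]
  set w := mvec (mExp P X) v with hw
  have hint : ∀ p q, Integrable (fun ω => X ω p q) P := by
    intro p q
    refine Integrable.mono' (integrable_const C) (measurable_entry hX p q).aestronglyMeasurable ?_
    filter_upwards [hbd] with ω h using le_trans (entry_le_opNorm _ p q) h
  have key := integral_inner_mvec hint v w
  have hb : ‖∫ ω, (inner ℂ (mvec (X ω) v) w : ℂ) ∂P‖ ≤ C * ‖v‖ * ‖w‖ := by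
    have : ∀ᵐ ω ∂P, ‖(inner ℂ (mvec (X ω) v) w : ℂ)‖ ≤ C * ‖v‖ * ‖w‖ := by
      filter_upwards [hbd] with ω h
      calc ‖(inner ℂ (mvec (X ω) v) w : ℂ)‖ ≤ ‖mvec (X ω) v‖ * ‖w‖ := norm_inner_le_norm _ _
        _ ≤ (opNorm (X ω) * ‖v‖) * ‖w‖ :=
            mul_le_mul_of_nonneg_right (norm_mvec_le _ _) (norm_nonneg _)
        _ ≤ (C * ‖v‖) * ‖w‖ := by
            have := mul_le_mul_of_nonneg_right (mul_le_mul_of_nonneg_right h (norm_nonneg v))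
              (norm_nonneg w)
            linarith
    calc ‖∫ ω, (inner ℂ (mvec (X ω) v) w : ℂ) ∂P‖ ≤ ∫ _, C * ‖v‖ * ‖w‖ ∂P :=
          norm_integral_le_of_norm_le (integrable_const _) this
      _ = C * ‖v‖ * ‖w‖ := by simp
  have hsq : ‖w‖ ^ 2 ≤ C * ‖v‖ * ‖w‖ := by
    have h1 : ‖w‖ ^ 2 = RCLike.re (inner ℂ w w : ℂ) := (inner_self_eq_norm_sq w).symm
    have h2 : RCLike.re (inner ℂ w w : ℂ) ≤ ‖(inner ℂ w w : ℂ)‖ := RCLike.re_le_norm _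
    rw [h1]
    calc RCLike.re (inner ℂ w w : ℂ) ≤ ‖(inner ℂ w w : ℂ)‖ := h2
      _ = ‖∫ ω, (inner ℂ (mvec (X ω) v) w : ℂ) ∂P‖ := by rw [key]
      _ ≤ C * ‖v‖ * ‖w‖ := hb
  by_cases h0 : ‖w‖ = 0
  · rw [h0]; positivity
  · have hpos : 0 < ‖w‖ := lt_of_le_of_ne (norm_nonneg _) (Ne.symm h0)
    have h3 : ‖w‖ * ‖w‖ ≤ (C * ‖v‖) * ‖w‖ := by nlinarith [hsq]
    exact (mul_le_mul_iff_left₀ hpos).mp h3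

end Aux

namespace Aux

variable {d : ℕ} {Ω : Type*} [MeasurableSpace Ω] {P : Measure Ω} [IsProbabilityMeasure P]

lemma opNorm_sub_le (A B : Matrix (Fin d) (Fin d) ℂ) :
    opNorm (A - B) ≤ opNorm A + opNorm B := by
  rw [opNorm, opNorm, opNorm, map_sub]; exact norm_sub_le _ _

lemma prodDesc_eq_list {N : ℕ} (G : Fin N → Matrix (Fin d) (Fin d) ℂ) :
    prodDesc G = ((List.finRange N).reverse.map G).prod := by
  rw [prodDesc, List.ofFn_eq_map, List.map_reverse]

lemma mExp_const_mul (C : Matrix (Fin d) (Fin d) ℂ) (X : Ω → Matrix (Fin d) (Fin d) ℂ)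
    (hint : ∀ p q, Integrable (fun ω => X ω p q) P) :
    mExp P (fun ω => C * X ω) = C * mExp P X := by
  ext p q
  rw [mExp_apply, Matrix.mul_apply]
  have h1 : ∀ ω, (C * X ω) p q = ∑ r, C p r * X ω r q := fun ω => Matrix.mul_apply
  rw [integral_congr_ae (Filter.Eventually.of_forall h1),
    integral_finset_sum _ fun r _ => (hint r q).const_mul (C p r)]
  exact Finset.sum_congr rfl fun r _ => by rw [integral_const_mul, mExp_apply]

end Aux

open Aux in
theorem expected_single_shot_error_randomized_product
    {Ω : Type*} [MeasurableSpace Ω] (P : Measure Ω) [IsProbabilityMeasure P]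
    (N d : ℕ) (hN : 1 ≤ N) (hd : 1 ≤ d)
    (Ut : Fin N → Ω → Matrix (Fin d) (Fin d) ℂ)
    (hmeas : ∀ j, Measurable (Ut j))
    (hindep : iIndepFun (m := fun _ => inferInstance) Ut P)
    (hunit : ∀ j, ∀ᵐ ω ∂P, Ut j ω ∈ Matrix.unitaryGroup (Fin d) ℂ)
    (Q : Fin N → Matrix (Fin d) (Fin d) ℂ)
    (hQ : ∀ j, Q j ∈ Matrix.unitaryGroup (Fin d) ℂ)
    (U : Fin N → Matrix (Fin d) (Fin d) ℂ)
    (hU : ∀ j, U j ∈ Matrix.unitaryGroup (Fin d) ℂ)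
    (b : ℤ) (hb : Real.sqrt N ≤ (2 : ℝ) ^ b)
    (hdev : ∀ l, ∀ᵐ ω ∂P,
      opNorm (Ut l ω - mExp P (Ut l)) ≤ 2 * Real.pi * (2 : ℝ) ^ (-b))
    (hsys : ∀ l,
      opNorm (mExp P (Ut l) - U l) ≤ Real.pi ^ 2 * (2 : ℝ) ^ (-(2 * b + 1)))
    (ψ : EuclideanSpace ℂ (Fin d)) (hψ : ‖ψ‖ ≤ 1) :
    (∫ ω, ‖mvec (prodDesc (fun j => Q j * Ut j ω) -
        prodDesc (fun j => Q j * U j)) ψ‖ ∂P) ≤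
      4 * Real.pi * Real.sqrt N * (2 : ℝ) ^ (-b) := by
  classical
  have hu_all : ∀ᵐ ω ∂P, ∀ j, Ut j ω ∈ Matrix.unitaryGroup (Fin d) ℂ := ae_all_iff.mpr hunit
  set Qm : Matrix (Fin d) (Fin d) ℂ := prodDesc (fun j => Q j * U j) with hQmdef
  set Qt : Ω → Matrix (Fin d) (Fin d) ℂ := fun ω => prodDesc (fun j => Q j * Ut j ω) with hQtdef
  set f : Ω → ℝ := fun ω => ‖mvec (Qt ω - Qm) ψ‖ with hfdef
  -- measurability
  have hAmeas : ∀ j, Measurable (fun ω => Q j * Ut j ω) :=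
    fun j => measurable_matrix_mul measurable_const (hmeas j)
  have hQtmeas : Measurable Qt := measurable_prodDesc hAmeas
  have hQmunit : Qm ∈ Matrix.unitaryGroup (Fin d) ℂ :=
    prodDesc_mem_unitary _ fun j => mul_mem (hQ j) (hU j)
  have hψQm : ‖mvec Qm ψ‖ = ‖ψ‖ := norm_mvec_unitary hQmunit ψ
  have hQtnorm : ∀ᵐ ω ∂P, opNorm (Qt ω) ≤ 1 := by
    filter_upwards [hu_all] with ω hω
    exact opNorm_prodDesc_le_one _ fun j => opNorm_unitary_le (mul_mem (hQ j) (hω j))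
  have hUtnorm : ∀ j, ∀ᵐ ω ∂P, opNorm (Ut j ω) ≤ 1 := fun j => by
    filter_upwards [hunit j] with ω hω using opNorm_unitary_le hω
  have hUtint : ∀ j, ∀ p q, Integrable (fun ω => Ut j ω p q) P :=
    fun j => integrable_entry (hmeas j) (hUtnorm j)
  -- expectation of the random product
  have hindepA : iIndepFun (m := fun _ => matrixMeasurableSpace) (fun j ω => Q j * Ut j ω) P := by
    have := hindep.comp (fun j M => Q j * M)
      (fun j => measurable_matrix_mul measurable_const measurable_id)
    exact this
  have hbdA : ∀ᵐ ω ∂P, ∀ j, opNorm (Q j * Ut j ω) ≤ 1 := by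
    filter_upwards [hu_all] with ω hω j
    exact opNorm_unitary_le (mul_mem (hQ j) (hω j))
  have hEQ : mExp P Qt = prodDesc (fun j => Q j * mExp P (Ut j)) := by
    have h1 := mExp_list_prod (fun j ω => Q j * Ut j ω) hAmeas hindepA hbdA
      ((List.finRange N).reverse) (List.nodup_reverse.mpr (List.nodup_finRange N))
    calc mExp P Qt
        = mExp P (fun ω => (((List.finRange N).reverse).map (fun j => Q j * Ut j ω)).prod) := by
          rw [hQtdef]
          exact congrArg (mExp P) (funext fun ω => prodDesc_eq_list _)
      _ = (((List.finRange N).reverse).map (fun j => mExp P (fun ω => Q j * Ut j ω))).prod := h1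
      _ = prodDesc (fun j => mExp P (fun ω => Q j * Ut j ω)) := (prodDesc_eq_list _).symm
      _ = prodDesc (fun j => Q j * mExp P (Ut j)) :=
          congrArg prodDesc (funext fun j => mExp_const_mul (Q j) (Ut j) (hUtint j))
  have hEUnorm : ∀ j, opNorm (mExp P (Ut j)) ≤ 1 :=
    fun j => opNorm_mExp_le (hmeas j) zero_le_one (hUtnorm j)
  -- systematic error bound
  set ε : ℝ := Real.pi ^ 2 * (2 : ℝ) ^ (-(2 * b + 1)) with hεdef
  have hεnn : 0 ≤ ε := by positivity
  have hdiff : opNorm (Qm - mExp P Qt) ≤ N * ε := by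
    rw [hEQ, hQmdef]
    have hG1 : ∀ j, opNorm (Q j * U j) ≤ 1 :=
      fun j => opNorm_unitary_le (mul_mem (hQ j) (hU j))
    have hG2 : ∀ j, opNorm (Q j * mExp P (Ut j)) ≤ 1 := fun j => by
      calc opNorm (Q j * mExp P (Ut j)) ≤ opNorm (Q j) * opNorm (mExp P (Ut j)) :=
            opNorm_mul_le _ _
        _ ≤ 1 * 1 := mul_le_mul (opNorm_unitary_le (hQ j)) (hEUnorm j)
              (opNorm_nonneg _) zero_le_one
        _ = 1 := one_mul 1
    have h := prodDesc_diff_le (fun j => Q j * U j) (fun j => Q j * mExp P (Ut j)) hG1 hG2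
    refine le_trans h ?_
    have hj : ∀ j, opNorm (Q j * U j - Q j * mExp P (Ut j)) ≤ ε := by
      intro j
      rw [← mul_sub]
      calc opNorm (Q j * (U j - mExp P (Ut j)))
          ≤ opNorm (Q j) * opNorm (U j - mExp P (Ut j)) := opNorm_mul_le _ _
        _ ≤ 1 * opNorm (U j - mExp P (Ut j)) :=
            mul_le_mul_of_nonneg_right (opNorm_unitary_le (hQ j)) (opNorm_nonneg _)
        _ = opNorm (mExp P (Ut j) - U j) := by rw [one_mul, opNorm_sub_rev]
        _ ≤ ε := hsys j
    calc ∑ j, opNorm (Q j * U j - Q j * mExp P (Ut j)) ≤ ∑ _j : Fin N, ε :=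
          Finset.sum_le_sum fun j _ => hj j
      _ = N * ε := by rw [Finset.sum_const, Finset.card_univ, Fintype.card_fin, nsmul_eq_mul]
  -- the second-moment bound
  set y : EuclideanSpace ℂ (Fin d) := mvec Qm ψ with hydef
  set g : Ω → ℝ := fun ω => 2 * ‖ψ‖ ^ 2 - 2 * RCLike.re (inner ℂ (mvec (Qt ω) ψ) y : ℂ) with hgdef
  have hcoord : ∀ (i : Fin d), Measurable fun ω => mvec (Qt ω - Qm) ψ i := by
    intro i
    simp only [mvec_apply, Matrix.sub_apply]
    exact Finset.measurable_sum _ fun j _ =>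
      ((measurable_entry hQtmeas i j).sub measurable_const).mul measurable_const
  have hfmeas : Measurable f := by
    have h : f = fun ω => Real.sqrt (∑ i, ‖mvec (Qt ω - Qm) ψ i‖ ^ 2) := by
      funext ω
      show ‖mvec (Qt ω - Qm) ψ‖ = _
      exact EuclideanSpace.norm_eq _
    rw [h]
    exact (Finset.measurable_sum _ fun i _ => ((hcoord i).norm.pow measurable_const)).sqrt
  have hfbound : ∀ᵐ ω ∂P, f ω ∈ Set.Icc (0:ℝ) 2 := by
    filter_upwards [hQtnorm] with ω h
    refine ⟨norm_nonneg _, ?_⟩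
    calc f ω ≤ opNorm (Qt ω - Qm) * ‖ψ‖ := norm_mvec_le _ _
      _ ≤ 2 * 1 := by
          apply mul_le_mul _ hψ (norm_nonneg _) (by norm_num)
          calc opNorm (Qt ω - Qm) ≤ opNorm (Qt ω) + opNorm Qm := opNorm_sub_le _ _
            _ ≤ 1 + 1 := add_le_add h (opNorm_unitary_le hQmunit)
            _ = 2 := by norm_num
      _ = 2 := mul_one 2
  have hmem : MemLp f 2 P := memLp_of_bounded hfbound hfmeas.aestronglyMeasurable 2
  have hfint : Integrable f P := hmem.integrable one_le_two
  have hf2int : Integrable (fun ω => f ω ^ 2) P := by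
    have := hmem.integrable_sq
    simpa [sq] using this
  -- inner product integrand
  have hinner_meas : Measurable fun ω => (inner ℂ (mvec (Qt ω) ψ) y : ℂ) := by
    simp only [inner_mvec_expand]
    refine Finset.measurable_sum _ fun p _ => Finset.measurable_sum _ fun j _ => ?_
    exact (RCLike.continuous_conj.measurable.comp (measurable_entry hQtmeas p j)).mul measurable_const
  have hinner_bd : ∀ᵐ ω ∂P, ‖(inner ℂ (mvec (Qt ω) ψ) y : ℂ)‖ ≤ 1 := by
    filter_upwards [hQtnorm] with ω h
    calc ‖(inner ℂ (mvec (Qt ω) ψ) y : ℂ)‖ ≤ ‖mvec (Qt ω) ψ‖ * ‖y‖ := norm_inner_le_norm _ _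
      _ ≤ (1 * ‖ψ‖) * ‖ψ‖ := by
          rw [hψQm]
          apply mul_le_mul_of_nonneg_right _ (norm_nonneg ψ)
          calc ‖mvec (Qt ω) ψ‖ ≤ opNorm (Qt ω) * ‖ψ‖ := norm_mvec_le _ _
            _ ≤ 1 * ‖ψ‖ := mul_le_mul_of_nonneg_right h (norm_nonneg _)
      _ ≤ 1 := by nlinarith [norm_nonneg ψ]
  have hinner_int : Integrable (fun ω => (inner ℂ (mvec (Qt ω) ψ) y : ℂ)) P :=
    Integrable.mono' (integrable_const 1) hinner_meas.aestronglyMeasurable hinner_bd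
  have hgint : Integrable g P := by
    apply Integrable.sub (integrable_const _)
    exact (hinner_int.re).const_mul 2
  -- pathwise second moment inequality
  have hfg : ∀ᵐ ω ∂P, f ω ^ 2 ≤ g ω := by
    filter_upwards [hQtnorm] with ω h
    have hx : ‖mvec (Qt ω) ψ‖ ≤ ‖ψ‖ := by
      calc ‖mvec (Qt ω) ψ‖ ≤ opNorm (Qt ω) * ‖ψ‖ := norm_mvec_le _ _
        _ ≤ 1 * ‖ψ‖ := mul_le_mul_of_nonneg_right h (norm_nonneg _)
        _ = ‖ψ‖ := one_mul _
    have hexp : f ω ^ 2 = ‖mvec (Qt ω) ψ‖ ^ 2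
        - 2 * RCLike.re (inner ℂ (mvec (Qt ω) ψ) y : ℂ) + ‖y‖ ^ 2 := by
      rw [hfdef]
      simp only [mvec_sub]
      exact norm_sub_sq (𝕜 := ℂ) _ _
    rw [hexp]
    show _ ≤ 2 * ‖ψ‖ ^ 2 - 2 * RCLike.re (inner ℂ (mvec (Qt ω) ψ) y : ℂ)
    have hy2 : ‖y‖ = ‖ψ‖ := hψQm
    nlinarith [hx, hy2, norm_nonneg (mvec (Qt ω) ψ), norm_nonneg ψ]
  -- integrate
  have hQtint : ∀ p q, Integrable (fun ω => Qt ω p q) P :=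
    integrable_entry hQtmeas hQtnorm
  have hEinner : ∫ ω, (inner ℂ (mvec (Qt ω) ψ) y : ℂ) ∂P = inner ℂ (mvec (mExp P Qt) ψ) y :=
    integral_inner_mvec hQtint ψ y
  have hIg : ∫ ω, g ω ∂P = 2 * ‖ψ‖ ^ 2 - 2 * RCLike.re (inner ℂ (mvec (mExp P Qt) ψ) y : ℂ) := by
    rw [hgdef]
    rw [integral_sub (integrable_const _) ((hinner_int.re).const_mul 2)]
    rw [integral_const]
    simp only [measure_univ, probReal_univ, ENNReal.toReal_one, smul_eq_mul, one_mul]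
    congr 1
    rw [integral_const_mul, ← hEinner, ← integral_re hinner_int]
  have hsecond : ∫ ω, f ω ^ 2 ∂P ≤ 2 * (N * ε) := by
    have h1 : ∫ ω, f ω ^ 2 ∂P ≤ ∫ ω, g ω ∂P := integral_mono_ae hf2int hgint hfg
    rw [hIg] at h1
    have h2 : 2 * ‖ψ‖ ^ 2 - 2 * RCLike.re (inner ℂ (mvec (mExp P Qt) ψ) y : ℂ) ≤ 2 * (N * ε) := by
      have hyy : RCLike.re (inner ℂ y y : ℂ) = ‖ψ‖ ^ 2 := by
        rw [inner_self_eq_norm_sq, hψQm]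
      have hsplit : (inner ℂ (mvec (Qm - mExp P Qt) ψ) y : ℂ)
          = (inner ℂ y y : ℂ) - (inner ℂ (mvec (mExp P Qt) ψ) y : ℂ) := by
        rw [mvec_sub, inner_sub_left]
      have hre : RCLike.re (inner ℂ (mvec (Qm - mExp P Qt) ψ) y : ℂ)
          = ‖ψ‖ ^ 2 - RCLike.re (inner ℂ (mvec (mExp P Qt) ψ) y : ℂ) := by
        rw [hsplit, map_sub, hyy]
      have hbound : RCLike.re (inner ℂ (mvec (Qm - mExp P Qt) ψ) y : ℂ) ≤ N * ε := by
        calc RCLike.re (inner ℂ (mvec (Qm - mExp P Qt) ψ) y : ℂ)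
            ≤ ‖(inner ℂ (mvec (Qm - mExp P Qt) ψ) y : ℂ)‖ := RCLike.re_le_norm _
          _ ≤ ‖mvec (Qm - mExp P Qt) ψ‖ * ‖y‖ := norm_inner_le_norm _ _
          _ ≤ (opNorm (Qm - mExp P Qt) * ‖ψ‖) * ‖y‖ :=
              mul_le_mul_of_nonneg_right (norm_mvec_le _ _) (norm_nonneg _)
          _ ≤ (N * ε) * 1 * 1 := by
              rw [hψQm]
              have h0ν : (0:ℝ) ≤ N * ε := mul_nonneg (Nat.cast_nonneg N) hεnn
              have := mul_le_mul hdiff hψ (norm_nonneg ψ) h0ν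
              nlinarith [norm_nonneg ψ, hψ, opNorm_nonneg (Qm - mExp P Qt)]
          _ = N * ε := by ring
      linarith [hre, hbound]
    linarith
  -- Cauchy-Schwarz via variance
  have hfnn : 0 ≤ ∫ ω, f ω ∂P := integral_nonneg fun ω => norm_nonneg _
  have hCS : (∫ ω, f ω ∂P) ^ 2 ≤ ∫ ω, f ω ^ 2 ∂P := by
    have hv := variance_nonneg f P
    rw [variance_eq_sub hmem] at hv
    have : P[f ^ 2] = ∫ ω, f ω ^ 2 ∂P := rfl
    rw [this] at hv
    linarith
  -- arithmetic conclusion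
  have hK : 2 * ((N:ℝ) * ε) = (Real.sqrt N * Real.pi * (2:ℝ) ^ (-b)) ^ 2 := by
    have h1 : ((2:ℝ) ^ (-b)) ^ 2 = (2:ℝ) ^ (-(2 * b + 1)) * 2 := by
      have e1 : ((2:ℝ) ^ (-b)) ^ 2 = (2:ℝ) ^ (-b + -b) := by
        rw [zpow_add₀ (by norm_num : (2:ℝ) ≠ 0), sq]
      rw [e1, show -b + -b = (-(2*b+1)) + 1 by ring,
        zpow_add₀ (by norm_num : (2:ℝ) ≠ 0), zpow_one]
    have h2 : Real.sqrt N ^ 2 = (N:ℝ) := Real.sq_sqrt (Nat.cast_nonneg N)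
    rw [mul_pow, mul_pow, h1, h2, hεdef]
    ring
  have hfinal : ∫ ω, f ω ∂P ≤ Real.sqrt N * Real.pi * (2:ℝ) ^ (-b) := by
    have h1 : ∫ ω, f ω ∂P = Real.sqrt ((∫ ω, f ω ∂P) ^ 2) := (Real.sqrt_sq hfnn).symm
    rw [h1]
    calc Real.sqrt ((∫ ω, f ω ∂P) ^ 2) ≤ Real.sqrt (2 * (N * ε)) :=
          Real.sqrt_le_sqrt (le_trans hCS hsecond)
      _ = Real.sqrt ((Real.sqrt N * Real.pi * (2:ℝ) ^ (-b)) ^ 2) := by rw [hK]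
      _ = Real.sqrt N * Real.pi * (2:ℝ) ^ (-b) := Real.sqrt_sq (by positivity)
  calc ∫ ω, f ω ∂P ≤ Real.sqrt N * Real.pi * (2:ℝ) ^ (-b) := hfinal
    _ ≤ 4 * Real.pi * Real.sqrt N * (2:ℝ) ^ (-b) := by
        have hp := Real.pi_pos.le
        have hs := Real.sqrt_nonneg (N:ℝ)
        have hz : (0:ℝ) ≤ (2:ℝ) ^ (-b) := by positivity
        nlinarith
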